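/- For every deterministic decision tree T, the guessing complexity of T equals its rank: G(T) = rank(T). -/
import Mathlib


/-- A deterministic decision tree over `{0,1}^n`: every internal node is labeled
by a query index `i ∈ Fin n` and has exactly two children (a 0-child and a
1-child); every leaf is labeled by an output value. -/
inductive DTree (n : ℕ) : Type where
  | leaf (b : Bool) : DTree n
  | node (i : Fin n) (t0 t1 : DTree n) : DTree n

namespace DTree

/-- On input `x`, from each internal node labeled `i` follow the edge to the
`x i`-child; output the label of the leaf reached. -/
def eval {n : ℕ} : DTree n → (Fin n → Bool) → Bool
  | leaf b, _ => b
  | node i t0 t1, x => if x i then t1.eval x else t0.eval x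

/-- `DTSize`: the total number of nodes of the tree. -/
def size {n : ℕ} : DTree n → ℕ
  | leaf _ => 1
  | node _ t0 t1 => 1 + t0.size + t1.size

/-- The depth: the maximum number of edges on a root-to-leaf path. -/
def depth {n : ℕ} : DTree n → ℕ
  | leaf _ => 0
  | node _ t0 t1 => 1 + max t0.depth t1.depth

/-- The rank of a binary tree: a leaf has rank 0; an internal node whose two
children have ranks `r₁, r₂` has rank `max r₁ r₂` if `r₁ ≠ r₂`, and `r₁ + 1`
if `r₁ = r₂`. -/
def rank {n : ℕ} : DTree n → ℕ
  | leaf _ => 0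
  | node _ t0 t1 => if t0.rank = t1.rank then t0.rank + 1 else max t0.rank t1.rank

end DTree

/-- The decision tree `t` computes the total Boolean function `f`. -/
def ComputesFn {n : ℕ} (t : DTree n) (f : (Fin n → Bool) → Bool) : Prop :=
  ∀ x, t.eval x = f x

/-- A two-coloring (black/red) of the edges of a binary tree, recorded as a tree
of the same shape: `black0`/`black1` record whether the edge to the 0 child / 1 child
is colored black (`true`) or red (`false`). -/
inductive GColoring : Type where
  | leaf : GColoring
  | node (black0 black1 : Bool) (c0 c1 : GColoring) : GColoring

namespace GColoring

/-- A G-coloring: every internal node has at most one outgoing black edge. -/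
def Valid : GColoring → Prop
  | leaf => True
  | node b0 b1 c0 c1 => ¬(b0 = true ∧ b1 = true) ∧ c0.Valid ∧ c1.Valid

/-- The maximum number of red edges on a root-to-leaf path. -/
def maxRed : GColoring → ℕ
  | leaf => 0
  | node b0 b1 c0 c1 =>
      max ((if b0 then 0 else 1) + c0.maxRed) ((if b1 then 0 else 1) + c1.maxRed)

end GColoring

/-- The coloring `c` has the same shape as the decision tree `t`
(i.e. it is a coloring of the edges of `t`). -/
def MatchesG {n : ℕ} : DTree n → GColoring → Prop
  | DTree.leaf _, GColoring.leaf => True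
  | DTree.node _ t0 t1, GColoring.node _ _ c0 c1 => MatchesG t0 c0 ∧ MatchesG t1 c1
  | _, _ => False

/-- The guessing complexity `G(T)`: the minimum, over all G-colorings of `T`, of
the maximum number of red edges on a root-to-leaf path of `T`. -/
noncomputable def guessingComplexity {n : ℕ} (t : DTree n) : ℕ :=
  sInf {k : ℕ | ∃ c : GColoring, MatchesG t c ∧ c.Valid ∧ c.maxRed = k}

/-- Canonical coloring: the edge to the child of larger rank is black. -/
def colorOf {n : ℕ} : DTree n → GColoring
  | DTree.leaf _ => GColoring.leaf
  | DTree.node _ t0 t1 =>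
      GColoring.node (decide (t1.rank ≤ t0.rank)) (decide (t0.rank < t1.rank))
        (colorOf t0) (colorOf t1)

lemma colorOf_matches {n : ℕ} (t : DTree n) : MatchesG t (colorOf t) := by
  induction t with
  | leaf b => trivial
  | node i t0 t1 ih0 ih1 => exact ⟨ih0, ih1⟩

lemma colorOf_valid {n : ℕ} (t : DTree n) : (colorOf t).Valid := by
  induction t with
  | leaf b => trivial
  | node i t0 t1 ih0 ih1 =>
    refine ⟨?_, ih0, ih1⟩
    rintro ⟨h0, h1⟩
    simp only [decide_eq_true_eq] at h0 h1
    omega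

lemma colorOf_maxRed {n : ℕ} (t : DTree n) : (colorOf t).maxRed = t.rank := by
  induction t with
  | leaf b => rfl
  | node i t0 t1 ih0 ih1 =>
    simp only [colorOf, GColoring.maxRed, DTree.rank, ih0, ih1]
    split_ifs <;> simp_all <;> omega

lemma rank_le_maxRed {n : ℕ} (t : DTree n) (c : GColoring)
    (hm : MatchesG t c) (hv : c.Valid) : t.rank ≤ c.maxRed := by
  induction t generalizing c with
  | leaf b => exact Nat.zero_le _
  | node i t0 t1 ih0 ih1 =>
    cases c with
    | leaf => exact absurd hm not_false
    | node b0 b1 c0 c1 =>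
      obtain ⟨hm0, hm1⟩ := hm
      obtain ⟨hb, hv0, hv1⟩ := hv
      have h0 := ih0 c0 hm0 hv0
      have h1 := ih1 c1 hm1 hv1
      simp only [DTree.rank, GColoring.maxRed]
      cases b0 <;> cases b1 <;>
        [skip; skip; skip; exact absurd ⟨rfl, rfl⟩ hb] <;>
        simp only [Bool.false_eq_true, if_false, if_true] <;>
        split_ifs <;> omega

/-- For every deterministic decision tree `T`, the guessing
complexity of `T` equals its rank: `G(T) = rank(T)`. -/
theorem guessingComplexity_eq_rank {n : ℕ} (t : DTree n) :
    guessingComplexity t = t.rank := by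
  refine le_antisymm (Nat.sInf_le ⟨colorOf t, colorOf_matches t, colorOf_valid t,
    colorOf_maxRed t⟩) (le_csInf ⟨_, colorOf t, colorOf_matches t, colorOf_valid t, colorOf_maxRed t⟩ ?_)
  rintro k ⟨c, hm, hv, rfl⟩
  exact rank_le_maxRed t c hm hv
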